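/- Fix natural numbers n, t, m ≥ 2 and sizes s_1, …, s_m ≥ 1 with s_1 + … + s_m ≤ n. An adaptive deterministic testing strategy is a family of functions T_k : (Fin k → Bool) → Finset (Fin n) for k < t; for an instance (S_1, …, S_m) of pairwise disjoint subsets of Fin n with |S_i| = s_i for all i, the outcome sequence o ∈ (Fin t → Bool) is defined recursively by: o_k = true iff T_k(o restricted to indices < k) intersects every S_i. Suppose there is a decoder D : (Fin t → Bool) → Finset (Finset (Fin n)) such that for every such instance, D applied to its outcome sequence equals the unordered family {S_1, …, S_m}. Then ∏_{i=1}^m C(n − ∑_{v=1}^{i−1} s_v, s_i) ≤ m! · 2^t. -/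

import Mathlib

lemma sum_Iio_cs {m : ℕ} (s : Fin (m+1) → ℕ) (i : Fin m) :
    ∑ v ∈ Finset.Iio (Fin.castSucc i), s v = ∑ v ∈ Finset.Iio i, s (Fin.castSucc v) := by
  refine Finset.sum_bij'
    (fun a ha => (⟨a.val, lt_of_lt_of_le (Fin.lt_def.mp (Finset.mem_Iio.mp ha)) i.isLt.le⟩ : Fin m))
    (fun a _ => a.castSucc) ?_ ?_ ?_ ?_ ?_
  · intro a ha; rw [Finset.mem_Iio] at *; exact ha
  · intro a ha; rw [Finset.mem_Iio] at *; exact ha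
  · intro a ha; apply Fin.ext; rfl
  · intro a ha; apply Fin.ext; rfl
  · intro a ha; exact congrArg s (Fin.ext rfl)

lemma sum_Iio_last {m : ℕ} (s : Fin (m+1) → ℕ) :
    ∑ v ∈ Finset.Iio (Fin.last m), s v = ∑ v : Fin m, s (Fin.castSucc v) := by
  refine Finset.sum_bij'
    (fun a ha => (⟨a.val, Fin.lt_def.mp (Finset.mem_Iio.mp ha)⟩ : Fin m))
    (fun a _ => a.castSucc) ?_ ?_ ?_ ?_ ?_
  · intro a ha; exact Finset.mem_univ _
  · intro a ha; rw [Finset.mem_Iio]; exact Fin.castSucc_lt_last a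
  · intro a ha; apply Fin.ext; rfl
  · intro a ha; apply Fin.ext; rfl
  · intro a ha; exact congrArg s (Fin.ext rfl)

/-- The set of instances with sizes `s`. -/
noncomputable def gtInstances (n m : ℕ) (s : Fin m → ℕ) : Finset (Fin m → Finset (Fin n)) :=
  @Finset.filter _ (fun S => (∀ i j, i ≠ j → Disjoint (S i) (S j)) ∧ ∀ i, (S i).card = s i)
    (Classical.decPred _) Finset.univ

lemma mem_gtInstances {n m : ℕ} {s : Fin m → ℕ} {S : Fin m → Finset (Fin n)} :
    S ∈ gtInstances n m s ↔
      (∀ i j, i ≠ j → Disjoint (S i) (S j)) ∧ ∀ i, (S i).card = s i := by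
  unfold gtInstances
  simp only [Finset.mem_filter, Finset.mem_univ, true_and]

lemma gtInstances_card_lb (n : ℕ) : ∀ (m : ℕ) (s : Fin m → ℕ),
    ∏ i, Nat.choose (n - ∑ v ∈ Finset.Iio i, s v) (s i) ≤ (gtInstances n m s).card := by
  intro m
  induction m with
  | zero =>
    intro s
    simp only [Finset.univ_eq_empty, Finset.prod_empty]
    have : (fun _ : Fin 0 => (∅ : Finset (Fin n))) ∈ gtInstances n 0 s := by
      rw [mem_gtInstances]
      exact ⟨fun i => i.elim0, fun i => i.elim0⟩
    exact Finset.card_pos.mpr ⟨_, this⟩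
  | succ m ih =>
    intro s
    classical
    set s' : Fin m → ℕ := fun i => s (Fin.castSucc i) with hs'
    set A' := gtInstances n m s' with hA'
    set A := gtInstances n (m+1) s with hA
    have hmap : ∀ S ∈ A, (fun i => S (Fin.castSucc i)) ∈ A' := by
      intro S hS
      rw [mem_gtInstances] at hS ⊢
      exact ⟨fun i j hij => hS.1 _ _ (fun h => hij (Fin.castSucc_injective _ h)),
        fun i => hS.2 _⟩
    have hcard : A.card = ∑ y ∈ A', (A.filter (fun S => (fun i => S (Fin.castSucc i)) = y)).card :=
      Finset.card_eq_sum_card_fiberwise hmap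
    -- bound each fiber from below
    have hfiber : ∀ y ∈ A',
        Nat.choose (n - ∑ v : Fin m, s' v) (s (Fin.last m)) ≤
          (A.filter (fun S => (fun i => S (Fin.castSucc i)) = y)).card := by
      intro y hy
      rw [mem_gtInstances] at hy
      set U : Finset (Fin n) := Finset.univ \ Finset.univ.biUnion y with hU
      have hUcard : n - ∑ v : Fin m, s' v ≤ U.card := by
        have h1 : (Finset.univ.biUnion y).card ≤ ∑ v : Fin m, s' v := by
          refine le_trans Finset.card_biUnion_le ?_
          exact Finset.sum_le_sum (fun i _ => (hy.2 i).le)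
        have h2 : U.card = n - (Finset.univ.biUnion y).card := by
          rw [hU, Finset.card_sdiff_of_subset (Finset.subset_univ _), Finset.card_univ, Fintype.card_fin]
        rw [h2]
        exact Nat.sub_le_sub_left h1 n
      calc Nat.choose (n - ∑ v : Fin m, s' v) (s (Fin.last m))
          ≤ Nat.choose U.card (s (Fin.last m)) := Nat.choose_le_choose _ hUcard
        _ = (U.powersetCard (s (Fin.last m))).card := (Finset.card_powersetCard _ _).symm
        _ ≤ _ := ?_
      refine Finset.card_le_card_of_injOn (fun X => Fin.snoc y X) ?_ ?_
      · intro X hX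
        rw [Finset.mem_coe, Finset.mem_powersetCard] at hX
        rw [Finset.mem_coe, Finset.mem_filter]
        refine ⟨?_, funext fun i => Fin.snoc_castSucc _ _ _⟩
        rw [mem_gtInstances]
        constructor
        · intro i j
          induction i using Fin.lastCases with
          | last =>
            induction j using Fin.lastCases with
            | last => intro hij; exact absurd rfl hij
            | cast j' =>
              intro _
              simp only [Fin.snoc_last, Fin.snoc_castSucc]
              refine Finset.disjoint_left.mpr ?_
              intro a haX hay
              have haU : a ∈ U := hX.1 haX
              rw [hU, Finset.mem_sdiff] at haU
              exact haU.2 (Finset.mem_biUnion.mpr ⟨j', Finset.mem_univ _, hay⟩)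
          | cast i' =>
            induction j using Fin.lastCases with
            | last =>
              intro _
              simp only [Fin.snoc_last, Fin.snoc_castSucc]
              refine Finset.disjoint_right.mpr ?_
              intro a haX hay
              have haU : a ∈ U := hX.1 haX
              rw [hU, Finset.mem_sdiff] at haU
              exact haU.2 (Finset.mem_biUnion.mpr ⟨i', Finset.mem_univ _, hay⟩)
            | cast j' =>
              intro hij
              simp only [Fin.snoc_castSucc]
              exact hy.1 i' j' (fun h => hij (congrArg Fin.castSucc h))
        · intro i
          induction i using Fin.lastCases with
          | last => simp only [Fin.snoc_last]; exact hX.2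
          | cast i' => simp only [Fin.snoc_castSucc]; exact hy.2 i'
      · intro X hX X' hX' h
        have h2 := congrFun h (Fin.last m)
        simp only [Fin.snoc_last] at h2
        exact h2
    calc ∏ i, Nat.choose (n - ∑ v ∈ Finset.Iio i, s v) (s i)
        = (∏ i : Fin m, Nat.choose (n - ∑ v ∈ Finset.Iio i, s' v) (s' i)) *
            Nat.choose (n - ∑ v : Fin m, s' v) (s (Fin.last m)) := by
          rw [Fin.prod_univ_castSucc]
          congr 1
          · exact Finset.prod_congr rfl fun i _ => by rw [sum_Iio_cs]
          · rw [sum_Iio_last]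
      _ ≤ A'.card * Nat.choose (n - ∑ v : Fin m, s' v) (s (Fin.last m)) :=
          Nat.mul_le_mul_right _ (ih s')
      _ = ∑ _y ∈ A', Nat.choose (n - ∑ v : Fin m, s' v) (s (Fin.last m)) := by
          rw [Finset.sum_const, smul_eq_mul]
      _ ≤ ∑ y ∈ A', (A.filter (fun S => (fun i => S (Fin.castSucc i)) = y)).card :=
          Finset.sum_le_sum hfiber
      _ = A.card := hcard.symm

/-- The outcome sequence of strategy `T` on instance `S`, as a function on `ℕ`. -/
def gtOutcome {n t m : ℕ} (T : (k : Fin t) → (Fin (k : ℕ) → Bool) → Finset (Fin n))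
    (S : Fin m → Finset (Fin n)) : ℕ → Bool
  | k =>
    if h : k < t then
      decide (∀ i : Fin m,
        ((T ⟨k, h⟩ (fun j : Fin k => gtOutcome T S j)) ∩ S i).Nonempty)
    else false
  termination_by k => k
  decreasing_by all_goals exact j.isLt

/-- Counting lower bound for adaptive deterministic concomitant group testing:
if an adaptive deterministic strategy `T` with `t` tests and decoder `D` recovers the
unordered family `{S 1, …, S m}` for every instance of `m` pairwise disjoint subsets with
`|S i| = s i`, then `∏ i, C(n − ∑_{v<i} s v, s i) ≤ m! · 2^t`. -/
theorem stmt1 (n t m : ℕ) (hm : 2 ≤ m) (s : Fin m → ℕ) (hs : ∀ i, 1 ≤ s i)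
    (hsum : ∑ i, s i ≤ n)
    (T : (k : Fin t) → (Fin (k : ℕ) → Bool) → Finset (Fin n))
    (D : (Fin t → Bool) → Finset (Finset (Fin n)))
    (hD : ∀ S : Fin m → Finset (Fin n),
      (∀ i j, i ≠ j → Disjoint (S i) (S j)) → (∀ i, (S i).card = s i) →
      ∀ o : Fin t → Bool,
        (∀ k : Fin t, o k = true ↔
          ∀ i : Fin m, ((T k (fun j : Fin (k : ℕ) => o ⟨j.val, j.isLt.trans k.isLt⟩)) ∩ S i).Nonempty) →
        D o = Finset.image S Finset.univ) :
    ∏ i : Fin m, Nat.choose (n - ∑ v ∈ Finset.Iio i, s v) (s i) ≤ Nat.factorial m * 2 ^ t := by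
  classical
  set A := gtInstances n m s with hA
  have hlb := gtInstances_card_lb n m s
  set g : (Fin m → Finset (Fin n)) → (Fin t → Bool) := fun S k => gtOutcome T S k.val with hg
  have hspec : ∀ S : Fin m → Finset (Fin n), ∀ k : Fin t,
      g S k = true ↔ ∀ i : Fin m,
        ((T k (fun j : Fin (k : ℕ) => g S ⟨j.val, j.isLt.trans k.isLt⟩)) ∩ S i).Nonempty := by
    intro S k
    show gtOutcome T S k.val = true ↔ _
    rw [gtOutcome]
    rw [dif_pos k.isLt, decide_eq_true_iff]
  have hDg : ∀ S ∈ A, D (g S) = Finset.image S Finset.univ := by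
    intro S hS
    rw [hA, mem_gtInstances] at hS
    exact hD S hS.1 hS.2 (g S) (hspec S)
  have hinj : ∀ S ∈ A, Function.Injective S := by
    intro S hS
    rw [hA, mem_gtInstances] at hS
    intro i j hSij
    by_contra hij
    have hd := hS.1 i j hij
    rw [hSij] at hd
    have h0 : (S j).card = 0 := by
      rw [Finset.card_eq_zero, ← Finset.bot_eq_empty]
      exact disjoint_self.mp hd
    have h1 := hS.2 j
    have h2 := hs j
    omega
  have hcard : A.card = ∑ o ∈ A.image g, (A.filter (fun S => g S = o)).card :=
    Finset.card_eq_sum_card_fiberwise (fun S hS => Finset.mem_image_of_mem g hS)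
  have hfiber : ∀ o ∈ A.image g, (A.filter (fun S => g S = o)).card ≤ Nat.factorial m := by
    intro o ho
    rcases Finset.mem_image.mp ho with ⟨S₀, hS₀, hgS₀⟩
    set F : Finset (Finset (Fin n)) := D o with hF
    have hFcard : F.card = m := by
      rw [hF, ← hgS₀, hDg S₀ hS₀, Finset.card_image_of_injective _ (hinj S₀ hS₀),
        Finset.card_univ, Fintype.card_fin]
    have key : ∀ S' ∈ A.filter (fun S => g S = o), Finset.image S' Finset.univ = F := by
      intro S' hS'
      rw [Finset.mem_filter] at hS'
      rw [hF, ← hS'.2, hDg S' hS'.1]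
    have hsurj : (A.filter (fun S => g S = o)).card ≤
        (Finset.univ : Finset (Fin m ↪ {x // x ∈ F})).card := by
      refine Finset.card_le_card_of_surjOn (fun e i => ((e : Fin m ↪ {x // x ∈ F}) i : Finset (Fin n))) ?_
      intro S' hS'
      rw [Finset.mem_coe] at hS'
      have hmemF : ∀ i, S' i ∈ F := by
        intro i
        rw [← key S' hS']
        exact Finset.mem_image_of_mem _ (Finset.mem_univ i)
      have hS'A : S' ∈ A := (Finset.mem_filter.mp hS').1
      refine ⟨⟨fun i => ⟨S' i, hmemF i⟩, ?_⟩, Finset.mem_coe.mpr (Finset.mem_univ _), rfl⟩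
      intro i j h
      exact hinj S' hS'A (congrArg Subtype.val h)
    rw [Finset.card_univ] at hsurj
    have hemb : Fintype.card (Fin m ↪ {x // x ∈ F}) = Nat.factorial m := by
      rw [Fintype.card_embedding_eq, Fintype.card_coe, hFcard, Fintype.card_fin,
        Nat.descFactorial_self]
    rwa [hemb] at hsurj
  have hub : A.card ≤ Nat.factorial m * 2 ^ t := by
    calc A.card = ∑ o ∈ A.image g, (A.filter (fun S => g S = o)).card := hcard
      _ ≤ ∑ _o ∈ A.image g, Nat.factorial m := Finset.sum_le_sum hfiber
      _ = (A.image g).card * Nat.factorial m := by rw [Finset.sum_const, smul_eq_mul]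
      _ ≤ 2 ^ t * Nat.factorial m := by
          refine Nat.mul_le_mul_right _ ?_
          calc (A.image g).card ≤ (Finset.univ : Finset (Fin t → Bool)).card :=
                Finset.card_le_card (Finset.subset_univ _)
            _ = 2 ^ t := by simp [Finset.card_univ]
      _ = Nat.factorial m * 2 ^ t := Nat.mul_comm _ _
  exact le_trans hlb hub
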